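/- Assume l ≥ 3. Then b_1^0 − b_2^0 − b_4^0 > 0, where b_1^0 = (l·(m*)³/D)·I(0, 2(3k+2)l+2), b_2^0 = (m*/D)·((2k+1)!/P(2k+1))·I(0, 2(k+1)l+2), and b_4^0 = (l·(m*)²/D)·((k+1)!/P(2k+1))·P(k)·I(0, 2(2k+1)l+2). -/

import Mathlib

open Finset

/-- The critical value m* = ∏_{j=0}^{k} (2j+1)/(2jl+1). -/
noncomputable def mStar (l k : ℕ) : ℝ :=
  ∏ j ∈ Finset.range (k + 1), (2 * (j : ℝ) + 1) / (2 * (j : ℝ) * (l : ℝ) + 1)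

/-- D = 2(2k+1)l + 2. -/
noncomputable def Dd (l k : ℕ) : ℝ := 2 * (2 * (k : ℝ) + 1) * (l : ℝ) + 2

/-- P(i) = ∏_{j=0}^{i-1} (jl + 1), with P(0) = 1. -/
noncomputable def Pp (l i : ℕ) : ℝ := ∏ j ∈ Finset.range i, ((j : ℝ) * (l : ℝ) + 1)

/-- I(a,b) = (2/l^{(a+1)/2})·Γ((a+1)/2)·Γ((b+1)/(2l))/Γ((a+1)/2 + (b+1)/(2l)),
the value of ∫_0^Ω Sn^a Cs^b dθ for even a, b. -/
noncomputable def Ii (l a b : ℕ) : ℝ :=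
  2 / (l : ℝ) ^ (((a : ℝ) + 1) / 2) * Real.Gamma (((a : ℝ) + 1) / 2) *
    Real.Gamma (((b : ℝ) + 1) / (2 * (l : ℝ))) /
    Real.Gamma (((a : ℝ) + 1) / 2 + ((b : ℝ) + 1) / (2 * (l : ℝ)))

/-! ### Auxiliary lemmas -/

lemma Gamma_add_half_sq_le {x : ℝ} (hx : 0 < x) :
    Real.Gamma (x + 1/2) ^ 2 ≤ Real.Gamma x ^ 2 * x := by
  have h := Real.Gamma_mul_add_mul_le_rpow_Gamma_mul_rpow_Gamma hx
    (show (0:ℝ) < x + 1 by linarith) (show (0:ℝ) < 1/2 by norm_num)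
    (show (0:ℝ) < 1/2 by norm_num) (by norm_num)
  rw [show (1/2:ℝ) * x + (1/2) * (x+1) = x + 1/2 by ring] at h
  have hgx := Real.Gamma_pos_of_pos hx
  have hgx1 := Real.Gamma_pos_of_pos (show (0:ℝ) < x + 1 by linarith)
  have hG12 := Real.Gamma_pos_of_pos (show (0:ℝ) < x + 1/2 by linarith)
  have hsq : (Real.Gamma x ^ (1/2:ℝ) * Real.Gamma (x+1) ^ (1/2:ℝ)) ^ 2
      = Real.Gamma x * Real.Gamma (x+1) := by
    rw [mul_pow, ← Real.rpow_natCast (Real.Gamma x ^ (1/2:ℝ)) 2,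
      ← Real.rpow_natCast (Real.Gamma (x+1) ^ (1/2:ℝ)) 2,
      ← Real.rpow_mul hgx.le, ← Real.rpow_mul hgx1.le]
    norm_num
  calc Real.Gamma (x + 1/2) ^ 2
      ≤ (Real.Gamma x ^ (1/2:ℝ) * Real.Gamma (x+1) ^ (1/2:ℝ)) ^ 2 := by
        apply pow_le_pow_left₀ hG12.le h
    _ = Real.Gamma x * Real.Gamma (x+1) := hsq
    _ = Real.Gamma x ^ 2 * x := by rw [Real.Gamma_add_one hx.ne']; ring

lemma gamma_ratio_ge {x : ℝ} (hx : 0 < x) :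
    1 / Real.sqrt x ≤ Real.Gamma x / Real.Gamma (x + 1/2) := by
  have h := Gamma_add_half_sq_le hx
  have hgx := Real.Gamma_pos_of_pos hx
  have hG12 := Real.Gamma_pos_of_pos (show (0:ℝ) < x + 1/2 by linarith)
  have hsx : 0 < Real.sqrt x := Real.sqrt_pos.2 hx
  rw [div_le_div_iff₀ hsx hG12, one_mul]
  have h2 : Real.Gamma (x + 1/2) ^ 2 ≤ (Real.Gamma x * Real.sqrt x) ^ 2 := by
    rw [mul_pow, Real.sq_sqrt hx.le]; exact h
  nlinarith [mul_pos hgx hsx]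

lemma gamma_ratio_le {x : ℝ} (hx : 1/2 < x) :
    Real.Gamma x / Real.Gamma (x + 1/2) ≤ 1 / Real.sqrt (x - 1/2) := by
  have hy : 0 < x - 1/2 := by linarith
  have h := Gamma_add_half_sq_le hy
  rw [show x - 1/2 + 1/2 = x by ring] at h
  have hGx := Real.Gamma_pos_of_pos (show (0:ℝ) < x by linarith)
  have hG12 := Real.Gamma_pos_of_pos (show (0:ℝ) < x + 1/2 by linarith)
  have hGy := Real.Gamma_pos_of_pos hy
  have hsy : 0 < Real.sqrt (x - 1/2) := Real.sqrt_pos.2 hy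
  rw [div_le_div_iff₀ hG12 hsy, one_mul]
  have hrec : Real.Gamma (x + 1/2) = (x - 1/2) * Real.Gamma (x - 1/2) := by
    rw [show x + 1/2 = (x - 1/2) + 1 by ring, Real.Gamma_add_one hy.ne']
  have h2 : (Real.Gamma x * Real.sqrt (x - 1/2)) ^ 2 ≤ Real.Gamma (x + 1/2) ^ 2 := by
    rw [mul_pow, Real.sq_sqrt hy.le, hrec]
    nlinarith [h, hGy, hy]
  nlinarith [mul_pos hGx hsy, hG12]

noncomputable def Eprod (l k : ℕ) : ℝ := ∏ j ∈ Finset.range (k+1), (2 * (j:ℝ) * (l:ℝ) + 1)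
noncomputable def Oprod (k : ℕ) : ℝ := ∏ j ∈ Finset.range (k+1), (2 * (j:ℝ) + 1)

lemma Eprod_pos (l k : ℕ) : 0 < Eprod l k := by
  apply Finset.prod_pos; intro j _; positivity

lemma Oprod_pos (k : ℕ) : 0 < Oprod k := by
  apply Finset.prod_pos; intro j _; positivity

lemma Pp_pos (l i : ℕ) : 0 < Pp l i := by
  apply Finset.prod_pos; intro j _; positivity

lemma mStar_eq (l k : ℕ) : mStar l k = Oprod k / Eprod l k := by
  rw [mStar, Oprod, Eprod, ← Finset.prod_div_distrib]

lemma mStar_pos (l k : ℕ) : 0 < mStar l k := by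
  rw [mStar_eq]; exact div_pos (Oprod_pos k) (Eprod_pos l k)

set_option maxHeartbeats 1000000 in
lemma Fbound (l : ℕ) (a : ℝ) (ha : 0 < a)
    (hstep : ∀ k : ℕ, 1 ≤ k →
      (2*(k:ℝ)+2) * ((2*(k:ℝ)+2)*(l:ℝ)+1) * (2*(k:ℝ)+1) * (2*(k:ℝ)+3+2*a)
        ≤ (2*(k:ℝ)+3)^2 * ((2*(k:ℝ)+1)*(l:ℝ)+1) * (2*(k:ℝ)+1+2*a))
    (hbase : (Nat.factorial 3 : ℝ) * (Eprod l 1)^2 * (2*(1:ℝ)+1+2*a)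
        ≤ (1+2*a) * (2*(1:ℝ)+1) * (Oprod 1)^2 * Pp l 3) :
    ∀ k : ℕ, 1 ≤ k →
      (Nat.factorial (2*k+1) : ℝ) * (Eprod l k)^2 * (2*(k:ℝ)+1+2*a)
        ≤ (1+2*a) * (2*(k:ℝ)+1) * (Oprod k)^2 * Pp l (2*k+1) := by
  intro k hk
  induction k, hk using Nat.le_induction with
  | base => exact_mod_cast hbase
  | succ k hk ih =>
    have hkr : (1:ℝ) ≤ (k:ℝ) := by exact_mod_cast hk
    set lr := (l:ℝ) with hlr
    have hlr0 : (0:ℝ) ≤ lr := by positivity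
    have hE : Eprod l (k+1) = Eprod l k * ((2*(k:ℝ)+2)*lr+1) := by
      rw [Eprod, Eprod, Finset.prod_range_succ]; push_cast; ring
    have hO : Oprod (k+1) = Oprod k * (2*(k:ℝ)+3) := by
      rw [Oprod, Oprod, Finset.prod_range_succ]; push_cast; ring
    have hP : Pp l (2*(k+1)+1) = Pp l (2*k+1) * ((2*(k:ℝ)+1)*lr+1) * ((2*(k:ℝ)+2)*lr+1) := by
      rw [show 2*(k+1)+1 = (2*k+1)+1+1 by ring, Pp, Pp,
        Finset.prod_range_succ, Finset.prod_range_succ]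
      push_cast; ring
    have hFa : (Nat.factorial (2*(k+1)+1) : ℝ)
        = (2*(k:ℝ)+3) * (2*(k:ℝ)+2) * (Nat.factorial (2*k+1) : ℝ) := by
      rw [show 2*(k+1)+1 = (2*k+1)+1+1 by ring, Nat.factorial_succ, Nat.factorial_succ]
      push_cast; ring
    set X := (Nat.factorial (2*k+1) : ℝ) with hX
    have hXpos : (0:ℝ) < X := by rw [hX]; exact_mod_cast Nat.factorial_pos _
    set E := Eprod l k; set O := Oprod k; set P := Pp l (2*k+1)
    have hEpos := Eprod_pos l k
    have hOpos := Oprod_pos k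
    have hPpos := Pp_pos l (2*k+1)
    set u : ℝ := (2*(k:ℝ)+2)*lr+1 with hu
    set v : ℝ := (2*(k:ℝ)+1)*lr+1 with hv
    have hupos : 0 < u := by rw [hu]; nlinarith
    have hvpos : 0 < v := by rw [hv]; nlinarith
    have hden : (0:ℝ) < 2*(k:ℝ)+1+2*a := by nlinarith
    have hc1 : (0:ℝ) ≤ (2*(k:ℝ)+3)*(2*(k:ℝ)+2)*u^2*(2*(k:ℝ)+3+2*a) := by
      have h1 : (0:ℝ) < 2*(k:ℝ)+3 := by nlinarith
      have h2 : (0:ℝ) < 2*(k:ℝ)+2 := by nlinarith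
      have h3 : (0:ℝ) < 2*(k:ℝ)+3+2*a := by nlinarith
      nlinarith [mul_pos h1 h2, mul_nonneg (mul_pos h1 h2).le (sq_nonneg u)]
    have hc2 : (0:ℝ) ≤ (1+2*a) * O^2 * P * u * (2*(k:ℝ)+3) := by
      have h1 : (0:ℝ) < 2*(k:ℝ)+3 := by nlinarith
      have h3 : (0:ℝ) < 1+2*a := by nlinarith
      positivity
    rw [hE, hO, hP, hFa]
    rw [← mul_le_mul_iff_of_pos_right hden]
    push_cast
    calc (2*(k:ℝ)+3) * (2*(k:ℝ)+2) * X * (E * u)^2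
          * (2*((k:ℝ)+1)+1+2*a) * (2*(k:ℝ)+1+2*a)
        = (X * E^2 * (2*(k:ℝ)+1+2*a)) * ((2*(k:ℝ)+3)*(2*(k:ℝ)+2)*u^2*(2*(k:ℝ)+3+2*a)) := by
          ring
      _ ≤ ((1+2*a) * (2*(k:ℝ)+1) * O^2 * P) * ((2*(k:ℝ)+3)*(2*(k:ℝ)+2)*u^2*(2*(k:ℝ)+3+2*a)) :=
          mul_le_mul_of_nonneg_right ih hc1
      _ = ((2*(k:ℝ)+2) * u * (2*(k:ℝ)+1) * (2*(k:ℝ)+3+2*a))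
            * ((1+2*a) * O^2 * P * u * (2*(k:ℝ)+3)) := by ring
      _ ≤ ((2*(k:ℝ)+3)^2 * v * (2*(k:ℝ)+1+2*a))
            * ((1+2*a) * O^2 * P * u * (2*(k:ℝ)+3)) := by
          apply mul_le_mul_of_nonneg_right _ hc2
          have := hstep k hk
          rw [hu, hv]; linarith
      _ = (1+2*a) * (2*((k:ℝ)+1)+1) * (O * (2*(k:ℝ)+3))^2 * (P * v * u)
            * (2*(k:ℝ)+1+2*a) := by ring

lemma Gbound (l k : ℕ) (hl : 3 ≤ l) (hk : 1 ≤ k) :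
    ((k:ℝ)*(l:ℝ)+1) * (Nat.factorial (k+1) : ℝ) * Pp l k * Eprod l k
      ≤ Oprod k * Pp l (2*k+1) := by
  have hlr : (3:ℝ) ≤ (l:ℝ) := by exact_mod_cast hl
  have hkr : (1:ℝ) ≤ (k:ℝ) := by exact_mod_cast hk
  have hPk := Pp_pos l k
  have hsplit : Pp l (2*k+1) = Pp l k * ∏ j ∈ range (k+1), (((k:ℝ)+(j:ℝ))*(l:ℝ)+1) := by
    rw [Pp, Pp, show 2*k+1 = k+(k+1) by ring, Finset.prod_range_add]
    congr 1
    apply Finset.prod_congr rfl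
    intro j _
    push_cast; ring
  rw [hsplit]
  have hfact : (Nat.factorial (k+1) : ℝ) = ∏ j ∈ range (k+1), ((j:ℝ)+1) := by
    rw [← Finset.prod_range_add_one_eq_factorial]
    push_cast; rfl
  have key : ((k:ℝ)*(l:ℝ)+1) * ∏ j ∈ range (k+1), (((j:ℝ)+1) * (2*(j:ℝ)*(l:ℝ)+1))
      ≤ ∏ j ∈ range (k+1), ((2*(j:ℝ)+1) * (((k:ℝ)+(j:ℝ))*(l:ℝ)+1)) := by
    rw [Finset.prod_range_succ' (fun j => ((j:ℝ)+1) * (2*(j:ℝ)*(l:ℝ)+1)) k,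
        Finset.prod_range_succ' (fun j => (2*(j:ℝ)+1) * (((k:ℝ)+(j:ℝ))*(l:ℝ)+1)) k]
    have hf0 : (((0:ℕ):ℝ)+1) * (2*((0:ℕ):ℝ)*(l:ℝ)+1) = 1 := by norm_num
    have hh0 : (2*((0:ℕ):ℝ)+1) * (((k:ℝ)+((0:ℕ):ℝ))*(l:ℝ)+1) = (k:ℝ)*(l:ℝ)+1 := by norm_num
    rw [hf0, hh0, mul_one]
    rw [mul_comm]
    apply mul_le_mul_of_nonneg_right _ (by nlinarith)
    apply Finset.prod_le_prod
    · intro j _; positivity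
    · intro j hj
      have hjk : (j:ℝ) + 1 ≤ (k:ℝ) := by exact_mod_cast Finset.mem_range.1 hj
      have hj0 : (0:ℝ) ≤ (j:ℝ) := by positivity
      have hl0 : (0:ℝ) ≤ (l:ℝ) := by linarith
      push_cast
      nlinarith [mul_nonneg hl0 (by linarith : (0:ℝ) ≤ (k:ℝ)-(j:ℝ)-1),
        mul_nonneg (mul_nonneg hj0 hl0) (by linarith : (0:ℝ) ≤ (k:ℝ)-(j:ℝ)-1),
        mul_nonneg hl0 (mul_nonneg hj0 hj0), mul_nonneg hl0 hj0]
  calc ((k:ℝ)*(l:ℝ)+1) * (Nat.factorial (k+1) : ℝ) * Pp l k * Eprod l k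
      = Pp l k * (((k:ℝ)*(l:ℝ)+1) * ∏ j ∈ range (k+1), (((j:ℝ)+1) * (2*(j:ℝ)*(l:ℝ)+1))) := by
        rw [hfact, Eprod, Finset.prod_mul_distrib]; ring
    _ ≤ Pp l k * ∏ j ∈ range (k+1), ((2*(j:ℝ)+1) * (((k:ℝ)+(j:ℝ))*(l:ℝ)+1)) :=
        mul_le_mul_of_nonneg_left key hPk.le
    _ = Oprod k * (Pp l k * ∏ j ∈ range (k+1), (((k:ℝ)+(j:ℝ))*(l:ℝ)+1)) := by
        rw [Oprod, Finset.prod_mul_distrib]; ring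

lemma Ii_eq (l b : ℕ) :
    Ii l 0 b = 2 / Real.sqrt (l:ℝ) * Real.Gamma (1/2) *
      (Real.Gamma (((b:ℝ)+1)/(2*(l:ℝ))) / Real.Gamma (((b:ℝ)+1)/(2*(l:ℝ)) + 1/2)) := by
  unfold Ii
  rw [show ((((0:ℕ):ℝ)) + 1)/2 = (1/2:ℝ) by norm_num]
  rw [← Real.sqrt_eq_rpow]
  rw [add_comm (1/2:ℝ) (((b:ℝ)+1)/(2*(l:ℝ)))]
  ring

lemma key_num (lr m F G g1 g2 g3 c1 c2 c3 A ρ w : ℝ)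
    (hm : 0 < m) (hlr : 0 < lr)
    (hc1 : 0 < c1) (hc2 : 1/2 < c2) (hc3 : 1/2 < c3)
    (hg1 : 1 / Real.sqrt c1 ≤ g1)
    (hg2 : g2 ≤ 1 / Real.sqrt (c2 - 1/2))
    (hg3 : g3 ≤ 1 / Real.sqrt (c3 - 1/2))
    (hF : 0 ≤ F) (hFb : F ≤ A * m^2) (hA : 0 ≤ A)
    (hG : 0 ≤ G) (hw : 0 < w) (hGb : G * w ≤ m)
    (hρ : 0 ≤ ρ)
    (hr2 : Real.sqrt c1 ≤ ρ * Real.sqrt (c2 - 1/2))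
    (hr3 : Real.sqrt c1 ≤ Real.sqrt 2 * Real.sqrt (c3 - 1/2))
    (hbudget : A * ρ * w + lr * Real.sqrt 2 < lr * w) :
    0 < lr * m^2 * g1 - F * g2 - lr * m * G * g3 := by
  have hs1 : 0 < Real.sqrt c1 := Real.sqrt_pos.2 hc1
  have hs2 : 0 < Real.sqrt (c2 - 1/2) := Real.sqrt_pos.2 (by linarith)
  have hs3 : 0 < Real.sqrt (c3 - 1/2) := Real.sqrt_pos.2 (by linarith)
  have hsq2 : 0 < Real.sqrt 2 := Real.sqrt_pos.2 (by norm_num)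
  have t1 : 1 ≤ g1 * Real.sqrt c1 := by
    have := mul_le_mul_of_nonneg_right hg1 hs1.le
    rwa [one_div, inv_mul_cancel₀ hs1.ne'] at this
  have t2 : g2 * Real.sqrt c1 ≤ ρ := by
    have h1 : g2 * Real.sqrt c1 ≤ (1/Real.sqrt (c2-1/2)) * Real.sqrt c1 :=
      mul_le_mul_of_nonneg_right hg2 hs1.le
    have h2 : (1/Real.sqrt (c2-1/2)) * Real.sqrt c1 ≤ ρ := by
      rw [div_mul_eq_mul_div, one_mul, div_le_iff₀ hs2]
      linarith [hr2]
    linarith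
  have t3 : g3 * Real.sqrt c1 ≤ Real.sqrt 2 := by
    have h1 : g3 * Real.sqrt c1 ≤ (1/Real.sqrt (c3-1/2)) * Real.sqrt c1 :=
      mul_le_mul_of_nonneg_right hg3 hs1.le
    have h2 : (1/Real.sqrt (c3-1/2)) * Real.sqrt c1 ≤ Real.sqrt 2 := by
      rw [div_mul_eq_mul_div, one_mul, div_le_iff₀ hs3]
      linarith [hr3]
    linarith
  have hXw : m^2 * (lr*w - A*ρ*w - lr*Real.sqrt 2)
      ≤ (lr*m^2*g1 - F*g2 - lr*m*G*g3) * (Real.sqrt c1 * w) := by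
    have B1 : lr*m^2*w * 1 ≤ lr*m^2*w * (g1 * Real.sqrt c1) :=
      mul_le_mul_of_nonneg_left t1 (by positivity)
    have B2 : (F * (g2 * Real.sqrt c1)) * w ≤ (A*m^2*ρ) * w := by
      apply mul_le_mul_of_nonneg_right _ hw.le
      calc F * (g2 * Real.sqrt c1) ≤ F * ρ := mul_le_mul_of_nonneg_left t2 hF
        _ ≤ (A*m^2) * ρ := mul_le_mul_of_nonneg_right hFb hρ
    have B3 : (lr*m*(g3 * Real.sqrt c1)) * (G*w) ≤ (lr*m*Real.sqrt 2) * m := by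
      apply mul_le_mul
      · exact mul_le_mul_of_nonneg_left t3 (by positivity)
      · exact hGb
      · positivity
      · positivity
    nlinarith [B1, B2, B3]
  have hpos : 0 < m^2 * (lr*w - A*ρ*w - lr*Real.sqrt 2) := by
    have h0 : 0 < lr*w - A*ρ*w - lr*Real.sqrt 2 := by linarith
    positivity
  have hfin : 0 < (lr*m^2*g1 - F*g2 - lr*m*G*g3) * (Real.sqrt c1 * w) :=
    lt_of_lt_of_le hpos hXw
  have hsw : 0 < Real.sqrt c1 * w := by positivity
  by_contra hcon
  push_neg at hcon
  nlinarith [hfin, hsw, hcon]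


/-! ### standalone arithmetic helper lemmas (small contexts for nlinarith) -/

lemma sqrt2_lt : Real.sqrt 2 < 1.4143 := by
  rw [Real.sqrt_lt' (by norm_num)]; norm_num

lemma sqrt3_lt : Real.sqrt 3 < 1.7321 := by
  rw [Real.sqrt_lt' (by norm_num)]; norm_num

lemma sqrt103_lt : Real.sqrt (10/3) < 1.8258 := by
  rw [Real.sqrt_lt' (by norm_num)]; norm_num

lemma budget1 : (7/6:ℝ) * Real.sqrt 3 * 6 + 3 * Real.sqrt 2 < 3 * 6 := by
  linarith [sqrt2_lt, sqrt3_lt]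

lemma budget2 (w : ℝ) (hw : 7 ≤ w) :
    (4/3:ℝ) * Real.sqrt 3 * w + 3 * Real.sqrt 2 < 3 * w := by
  have h1 : (0:ℝ) ≤ 3 - (4/3)*Real.sqrt 3 := by nlinarith [sqrt3_lt, Real.sqrt_nonneg 3]
  nlinarith [mul_nonneg (by linarith : (0:ℝ) ≤ w - 7) h1, sqrt2_lt, sqrt3_lt]

lemma budget3 (lr w : ℝ) (h4 : 4 ≤ lr) (hw : lr + 1 ≤ w) :
    (8/5:ℝ) * Real.sqrt 3 * w + lr * Real.sqrt 2 < lr * w := by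
  have h1 : (0:ℝ) ≤ lr - (8/5)*Real.sqrt 3 := by nlinarith [sqrt3_lt, Real.sqrt_nonneg 3]
  nlinarith [mul_nonneg (by linarith : (0:ℝ) ≤ w - (lr+1)) h1, sq_nonneg (lr-4),
    mul_le_mul_of_nonneg_left sqrt2_lt.le (by linarith : (0:ℝ) ≤ lr),
    mul_le_mul_of_nonneg_left sqrt3_lt.le (by linarith : (0:ℝ) ≤ lr)]

lemma budget4 (lr w : ℝ) (h7 : 7 ≤ lr) (hw : lr + 1 ≤ w) :
    (8/5:ℝ) * Real.sqrt (10/3) * w + lr * Real.sqrt 2 < lr * w := by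
  have h1 : (0:ℝ) ≤ lr - (8/5)*Real.sqrt (10/3) := by
    nlinarith [sqrt103_lt, Real.sqrt_nonneg (10/3:ℝ)]
  nlinarith [mul_nonneg (by linarith : (0:ℝ) ≤ w - (lr+1)) h1, sq_nonneg (lr-7),
    mul_le_mul_of_nonneg_left sqrt2_lt.le (by linarith : (0:ℝ) ≤ lr),
    mul_le_mul_of_nonneg_left sqrt103_lt.le (by linarith : (0:ℝ) ≤ lr)]

lemma step16 (l : ℕ) (hl3 : l = 3) : ∀ j : ℕ, 1 ≤ j →
    (2*(j:ℝ)+2) * ((2*(j:ℝ)+2)*(l:ℝ)+1) * (2*(j:ℝ)+1) * (2*(j:ℝ)+3+2*(1/6:ℝ))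
      ≤ (2*(j:ℝ)+3)^2 * ((2*(j:ℝ)+1)*(l:ℝ)+1) * (2*(j:ℝ)+1+2*(1/6:ℝ)) := by
  subst hl3
  intro j hj
  have hjr : (1:ℝ) ≤ (j:ℝ) := by exact_mod_cast hj
  push_cast
  nlinarith [hjr, sq_nonneg ((j:ℝ)-1)]

lemma step310 (l : ℕ) (hl : 3 ≤ l) : ∀ j : ℕ, 1 ≤ j →
    (2*(j:ℝ)+2) * ((2*(j:ℝ)+2)*(l:ℝ)+1) * (2*(j:ℝ)+1) * (2*(j:ℝ)+3+2*(3/10:ℝ))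
      ≤ (2*(j:ℝ)+3)^2 * ((2*(j:ℝ)+1)*(l:ℝ)+1) * (2*(j:ℝ)+1+2*(3/10:ℝ)) := by
  intro j hj
  have hjr : (1:ℝ) ≤ (j:ℝ) := by exact_mod_cast hj
  have hlr : (3:ℝ) ≤ (l:ℝ) := by exact_mod_cast hl
  nlinarith [mul_nonneg (by linarith : (0:ℝ) ≤ (j:ℝ)-1) (by linarith : (0:ℝ) ≤ (l:ℝ)-3),
    mul_nonneg (mul_nonneg (by linarith : (0:ℝ) ≤ (j:ℝ)-1) (by linarith : (0:ℝ) ≤ (j:ℝ)-1))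
      (by linarith : (0:ℝ) ≤ (l:ℝ)-3),
    sq_nonneg ((j:ℝ)-1), hjr, hlr]

lemma base16 : (Nat.factorial 3 : ℝ) * (Eprod 3 1)^2 * (2*(1:ℝ)+1+2*(1/6:ℝ))
    ≤ (1+2*(1/6:ℝ)) * (2*(1:ℝ)+1) * (Oprod 1)^2 * Pp 3 3 := by
  norm_num [Eprod, Oprod, Pp, Finset.prod_range_succ, Nat.factorial]

lemma base310 (l : ℕ) (hl : 3 ≤ l) :
    (Nat.factorial 3 : ℝ) * (Eprod l 1)^2 * (2*(1:ℝ)+1+2*(3/10:ℝ))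
      ≤ (1+2*(3/10:ℝ)) * (2*(1:ℝ)+1) * (Oprod 1)^2 * Pp l 3 := by
  have hlr : (3:ℝ) ≤ (l:ℝ) := by exact_mod_cast hl
  have he : Eprod l 1 = 2*(l:ℝ)+1 := by
    norm_num [Eprod, Finset.prod_range_succ]
  have ho : Oprod 1 = 3 := by
    norm_num [Oprod, Finset.prod_range_succ]
  have hp : Pp l 3 = ((l:ℝ)+1)*(2*(l:ℝ)+1) := by
    norm_num [Pp, Finset.prod_range_succ]
  rw [he, ho, hp, show ((Nat.factorial 3 : ℕ):ℝ) = 6 by norm_num [Nat.factorial]]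
  nlinarith [hlr, sq_nonneg (2*(l:ℝ)+1)]

lemma Fle_top (l k : ℕ) (hk : 1 ≤ k) (a : ℝ) (ha : 0 < a)
    (hcl : (Nat.factorial (2*k+1) : ℝ) * (Eprod l k)^2 * (2*(k:ℝ)+1+2*a)
      ≤ (1+2*a) * (2*(k:ℝ)+1) * (Oprod k)^2 * Pp l (2*k+1)) :
    (Nat.factorial (2*k+1) : ℝ) / Pp l (2*k+1) ≤ (1+2*a) * (mStar l k)^2 := by
  have hEpos := Eprod_pos l k
  have hOpos := Oprod_pos k
  have hPpos := Pp_pos l (2*k+1)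
  have hkr : (1:ℝ) ≤ (k:ℝ) := by exact_mod_cast hk
  have hXnn : (0:ℝ) ≤ (Nat.factorial (2*k+1):ℝ) := by positivity
  have hd : (0:ℝ) < 2*(k:ℝ)+1 := by linarith
  have h1 : (Nat.factorial (2*k+1):ℝ) * (Eprod l k)^2 * (2*(k:ℝ)+1)
      ≤ (1+2*a)*(2*(k:ℝ)+1)*(Oprod k)^2*Pp l (2*k+1) := by
    have h0 : (Nat.factorial (2*k+1):ℝ) * (Eprod l k)^2 * (2*(k:ℝ)+1)
        ≤ (Nat.factorial (2*k+1):ℝ) * (Eprod l k)^2 * (2*(k:ℝ)+1+2*a) := by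
      apply mul_le_mul_of_nonneg_left (by linarith) (by positivity)
    linarith
  have h2 : (Nat.factorial (2*k+1):ℝ) * (Eprod l k)^2
      ≤ (1+2*a)*(Oprod k)^2*Pp l (2*k+1) := by
    have h3 : ((Nat.factorial (2*k+1):ℝ) * (Eprod l k)^2) * (2*(k:ℝ)+1)
        ≤ ((1+2*a)*(Oprod k)^2*Pp l (2*k+1)) * (2*(k:ℝ)+1) := by nlinarith [h1]
    exact le_of_mul_le_mul_right h3 hd
  rw [mStar_eq, div_pow,
    show (1+2*a) * ((Oprod k)^2/(Eprod l k)^2) = ((1+2*a)*(Oprod k)^2)/(Eprod l k)^2 by ring,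
    div_le_div_iff₀ hPpos (pow_pos hEpos 2)]
  nlinarith [h2]

set_option maxHeartbeats 2000000 in
/-- Lemma 3.3: when l ≥ 3, b₁⁰ − b₂⁰ − b₄⁰ > 0. -/
theorem b1_sub_b2_sub_b4_pos (l k : ℕ) (hl : 3 ≤ l) (hk : 1 ≤ k) :
    0 < (l : ℝ) * mStar l k ^ 3 / Dd l k * Ii l 0 (2 * (3 * k + 2) * l + 2) -
        mStar l k / Dd l k * ((Nat.factorial (2 * k + 1) : ℝ) / Pp l (2 * k + 1)) *
          Ii l 0 (2 * (k + 1) * l + 2) -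
        (l : ℝ) * mStar l k ^ 2 / Dd l k * ((Nat.factorial (k + 1) : ℝ) / Pp l (2 * k + 1)) *
          Pp l k * Ii l 0 (2 * (2 * k + 1) * l + 2) := by
  have hlr : (3:ℝ) ≤ (l:ℝ) := by exact_mod_cast hl
  have hkr : (1:ℝ) ≤ (k:ℝ) := by exact_mod_cast hk
  have hlr0 : (0:ℝ) < (l:ℝ) := by linarith
  have hk0 : (0:ℝ) ≤ (k:ℝ) := by linarith
  have hkl : (0:ℝ) ≤ (k:ℝ)*(l:ℝ) := mul_nonneg hk0 hlr0.le
  rw [Ii_eq l (2 * (3 * k + 2) * l + 2), Ii_eq l (2 * (k + 1) * l + 2),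
    Ii_eq l (2 * (2 * k + 1) * l + 2)]
  set c1 : ℝ := (((2 * (3 * k + 2) * l + 2 : ℕ):ℝ) + 1)/(2*(l:ℝ)) with hc1def
  set c2 : ℝ := (((2 * (k + 1) * l + 2 : ℕ):ℝ) + 1)/(2*(l:ℝ)) with hc2def
  set c3 : ℝ := (((2 * (2 * k + 1) * l + 2 : ℕ):ℝ) + 1)/(2*(l:ℝ)) with hc3def
  have hc1e : c1 = (2*(3*(k:ℝ)+2)*(l:ℝ)+3)/(2*(l:ℝ)) := by
    rw [hc1def]; push_cast; ring
  have hc2e : c2 = (2*((k:ℝ)+1)*(l:ℝ)+3)/(2*(l:ℝ)) := by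
    rw [hc2def]; push_cast; ring
  have hc3e : c3 = (2*(2*(k:ℝ)+1)*(l:ℝ)+3)/(2*(l:ℝ)) := by
    rw [hc3def]; push_cast; ring
  have h2l : (0:ℝ) < 2*(l:ℝ) := by linarith
  have hc1 : 0 < c1 := by
    rw [hc1e]
    apply div_pos _ h2l
    linarith [hkl]
  have hc2 : 1/2 < c2 := by
    rw [hc2e, lt_div_iff₀ h2l]; linarith [hkl]
  have hc3 : 1/2 < c3 := by
    rw [hc3e, lt_div_iff₀ h2l]; linarith [hkl]
  set g1 : ℝ := Real.Gamma c1 / Real.Gamma (c1 + 1/2) with hg1def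
  set g2 : ℝ := Real.Gamma c2 / Real.Gamma (c2 + 1/2) with hg2def
  set g3 : ℝ := Real.Gamma c3 / Real.Gamma (c3 + 1/2) with hg3def
  set m : ℝ := mStar l k with hmdef
  set F : ℝ := (Nat.factorial (2 * k + 1) : ℝ) / Pp l (2 * k + 1) with hFdef
  set G : ℝ := (Nat.factorial (k + 1) : ℝ) / Pp l (2 * k + 1) * Pp l k with hGdef
  set κ : ℝ := 2 / Real.sqrt (l:ℝ) * Real.Gamma (1/2) with hκdef
  have hm : 0 < m := mStar_pos l k
  have hDd : 0 < Dd l k := by rw [Dd]; linarith [hkl]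
  have hκ : 0 < κ := by
    rw [hκdef]
    have h1 : 0 < Real.sqrt (l:ℝ) := Real.sqrt_pos.2 hlr0
    have h2 : 0 < Real.Gamma (1/2) := Real.Gamma_pos_of_pos (by norm_num)
    positivity
  have hgoal : (l : ℝ) * m ^ 3 / Dd l k * (κ * g1) -
      m / Dd l k * F * (κ * g2) -
      (l : ℝ) * m ^ 2 / Dd l k * ((Nat.factorial (k + 1) : ℝ) / Pp l (2 * k + 1)) *
        Pp l k * (κ * g3)
      = (κ * m / Dd l k) * ((l:ℝ) * m^2 * g1 - F * g2 - (l:ℝ) * m * G * g3) := by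
    rw [hGdef]; ring
  rw [hgoal]
  apply mul_pos (by positivity)
  have hEpos := Eprod_pos l k
  have hOpos := Oprod_pos k
  have hPpos := Pp_pos l (2*k+1)
  have hPkpos := Pp_pos l k
  have hg1b : 1 / Real.sqrt c1 ≤ g1 := gamma_ratio_ge hc1
  have hg2b : g2 ≤ 1 / Real.sqrt (c2 - 1/2) := gamma_ratio_le hc2
  have hg3b : g3 ≤ 1 / Real.sqrt (c3 - 1/2) := gamma_ratio_le hc3
  have hFnn : 0 ≤ F := by
    rw [hFdef]; positivity
  have hGnn : 0 ≤ G := by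
    rw [hGdef]; positivity
  have key3 : 2*(c3 - 1/2)*(2*(l:ℝ)) = 2*(2*(2*(k:ℝ)+1)*(l:ℝ)+3) - 2*(l:ℝ) := by
    rw [hc3e]; field_simp
  have hcc3 : c1 ≤ 2*(c3 - 1/2) := by
    rw [hc1e, div_le_iff₀ h2l, key3]
    linarith [mul_nonneg (by linarith : (0:ℝ) ≤ (k:ℝ)-1) hlr0.le]
  have hr3 : Real.sqrt c1 ≤ Real.sqrt 2 * Real.sqrt (c3 - 1/2) := by
    rw [← Real.sqrt_mul (by norm_num : (0:ℝ) ≤ 2)]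
    exact Real.sqrt_le_sqrt hcc3
  have hwpos : (0:ℝ) < (k:ℝ)*(l:ℝ)+1 := by linarith [hkl]
  have hGb : G * ((k:ℝ)*(l:ℝ)+1) ≤ m := by
    rw [hGdef, hmdef, mStar_eq]
    rw [div_mul_eq_mul_div, div_mul_eq_mul_div, div_le_div_iff₀ hPpos hEpos]
    have := Gbound l k hl hk
    nlinarith [this]
  rcases lt_or_ge l 7 with h7 | h7
  · -- 3 ≤ l ≤ 6 : use ρ = √3
    have hl6 : (l:ℝ) ≤ 6 := by exact_mod_cast (by omega : l ≤ 6)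
    have key2 : 3*(c2 - 1/2)*(2*(l:ℝ)) = 3*(2*((k:ℝ)+1)*(l:ℝ)+3) - 3*(l:ℝ) := by
      rw [hc2e]; field_simp
    have hcc2 : c1 ≤ 3*(c2 - 1/2) := by
      rw [hc1e, div_le_iff₀ h2l, key2]; linarith
    have hr2 : Real.sqrt c1 ≤ Real.sqrt 3 * Real.sqrt (c2 - 1/2) := by
      rw [← Real.sqrt_mul (by norm_num : (0:ℝ) ≤ 3)]
      exact Real.sqrt_le_sqrt hcc2
    by_cases h3 : l = 3
    · subst h3
      by_cases hk1 : k = 1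
      · subst hk1
        have hm37 : m = 3/7 := by
          rw [hmdef]; norm_num [mStar, Finset.prod_range_succ]
        have hP28 : Pp 3 (2*1+1) = 28 := by
          norm_num [Pp, Finset.prod_range_succ]
        have hPk1 : Pp 3 1 = 1 := by
          norm_num [Pp, Finset.prod_range_succ]
        have hFv : F = 3/14 := by
          rw [hFdef, hP28]; norm_num [Nat.factorial]
        have hGv : G = 1/14 := by
          rw [hGdef, hP28, hPk1]; norm_num [Nat.factorial]
        refine key_num _ m F G g1 g2 g3 c1 c2 c3 (7/6) (Real.sqrt 3) 6 hm (by positivity)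
          hc1 hc2 hc3 hg1b hg2b hg3b hFnn ?_ (by norm_num) hGnn (by norm_num) ?_
          (Real.sqrt_nonneg 3) hr2 hr3 ?_
        · rw [hFv, hm37]; norm_num
        · rw [hGv, hm37]; norm_num
        · have := budget1
          push_cast
          linarith
      · -- l = 3, k ≥ 2 : a = 1/6
        have hk2 : (2:ℝ) ≤ (k:ℝ) := by exact_mod_cast (by omega : 2 ≤ k)
        have hFb : F ≤ (4/3) * m^2 := by
          have h := Fle_top 3 k hk (1/6) (by norm_num)
            (Fbound 3 (1/6) (by norm_num) (step16 3 rfl) base16 k hk)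
          rw [hFdef, hmdef]
          norm_num at h ⊢
          linarith
        have hw7 : (7:ℝ) ≤ (k:ℝ)*((3:ℕ):ℝ)+1 := by push_cast; linarith
        refine key_num _ m F G g1 g2 g3 c1 c2 c3 (4/3) (Real.sqrt 3)
          ((k:ℝ)*((3:ℕ):ℝ)+1) hm (by positivity) hc1 hc2 hc3 hg1b hg2b hg3b hFnn hFb
          (by norm_num) hGnn hwpos hGb (Real.sqrt_nonneg 3) hr2 hr3 ?_
        have := budget2 ((k:ℝ)*((3:ℕ):ℝ)+1) hw7
        push_cast at this ⊢
        linarith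
    · -- 4 ≤ l ≤ 6 : a = 3/10
      have h4 : (4:ℝ) ≤ (l:ℝ) := by exact_mod_cast (by omega : 4 ≤ l)
      have hFb : F ≤ (8/5) * m^2 := by
        have h := Fle_top l k hk (3/10) (by norm_num)
          (Fbound l (3/10) (by norm_num) (step310 l hl) (base310 l hl) k hk)
        rw [hFdef, hmdef]
        norm_num at h ⊢
        linarith
      refine key_num _ m F G g1 g2 g3 c1 c2 c3 (8/5) (Real.sqrt 3)
        ((k:ℝ)*(l:ℝ)+1) hm (by positivity) hc1 hc2 hc3 hg1b hg2b hg3b hFnn hFb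
        (by norm_num) hGnn hwpos hGb (Real.sqrt_nonneg 3) hr2 hr3 ?_
      have hwl : (l:ℝ)+1 ≤ (k:ℝ)*(l:ℝ)+1 := by
        have : (1:ℝ)*(l:ℝ) ≤ (k:ℝ)*(l:ℝ) := by
          apply mul_le_mul_of_nonneg_right hkr hlr0.le
        linarith
      exact budget3 (l:ℝ) ((k:ℝ)*(l:ℝ)+1) h4 hwl
  · -- l ≥ 7 : ρ = √(10/3), a = 3/10
    have h7r : (7:ℝ) ≤ (l:ℝ) := by exact_mod_cast h7
    have key2 : (10/3)*(c2 - 1/2)*(2*(l:ℝ)) = (10/3)*(2*((k:ℝ)+1)*(l:ℝ)+3) - (10/3)*(l:ℝ) := by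
      rw [hc2e]; field_simp
    have hcc2 : c1 ≤ (10/3)*(c2 - 1/2) := by
      rw [hc1e, div_le_iff₀ h2l, key2]
      linarith [mul_nonneg (by linarith : (0:ℝ) ≤ (k:ℝ)-1) hlr0.le]
    have hr2 : Real.sqrt c1 ≤ Real.sqrt (10/3) * Real.sqrt (c2 - 1/2) := by
      rw [← Real.sqrt_mul (by norm_num : (0:ℝ) ≤ 10/3)]
      exact Real.sqrt_le_sqrt hcc2
    have hFb : F ≤ (8/5) * m^2 := by
      have h := Fle_top l k hk (3/10) (by norm_num)
        (Fbound l (3/10) (by norm_num) (step310 l hl) (base310 l hl) k hk)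
      rw [hFdef, hmdef]
      norm_num at h ⊢
      linarith
    refine key_num _ m F G g1 g2 g3 c1 c2 c3 (8/5) (Real.sqrt (10/3))
      ((k:ℝ)*(l:ℝ)+1) hm (by positivity) hc1 hc2 hc3 hg1b hg2b hg3b hFnn hFb
      (by norm_num) hGnn hwpos hGb (Real.sqrt_nonneg _) hr2 hr3 ?_
    have hwl : (l:ℝ)+1 ≤ (k:ℝ)*(l:ℝ)+1 := by
      have : (1:ℝ)*(l:ℝ) ≤ (k:ℝ)*(l:ℝ) := by
        apply mul_le_mul_of_nonneg_right hkr hlr0.le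
      linarith
    exact budget4 (l:ℝ) ((k:ℝ)*(l:ℝ)+1) h7r hwl
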